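/- Given two continuous functions G₁, G₂ on the sphere S^n with ∫_{S^n} G_i dμ > 0 for i = 1,2 (μ the Riemannian volume), there exists a hemisphere H such that ∫_H G_i dμ > 0 for both i = 1,2. -/

import Mathlib

open MeasureTheory Metric Set
open scoped RealInnerProductSpace Pointwise

section Aux

variable {n : ℕ}

lemma aux_null (n : ℕ) (v : sphere (0 : EuclideanSpace ℝ (Fin (n + 1))) 1) :
    ((volume : Measure (EuclideanSpace ℝ (Fin (n + 1)))).toSphere) {u : sphere (0 : EuclideanSpace ℝ (Fin (n + 1))) 1 |
      ⟪(v : EuclideanSpace ℝ (Fin (n + 1))), (u : EuclideanSpace ℝ (Fin (n + 1)))⟫ = 0} = 0 := by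
  set s : Set (sphere (0 : EuclideanSpace ℝ (Fin (n + 1))) 1) :=
    {u | ⟪(v : EuclideanSpace ℝ (Fin (n + 1))), (u : EuclideanSpace ℝ (Fin (n + 1)))⟫ = 0}
  have hmeas : MeasurableSet s := by
    have : Continuous fun u : sphere (0 : EuclideanSpace ℝ (Fin (n + 1))) 1 =>
        ⟪(v : EuclideanSpace ℝ (Fin (n + 1))), (u : EuclideanSpace ℝ (Fin (n + 1)))⟫ :=
      (continuous_const.inner continuous_subtype_val)
    exact (isClosed_eq this continuous_const).measurableSet
  rw [Measure.toSphere_apply' _ hmeas]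
  have hker : (volume : Measure (EuclideanSpace ℝ (Fin (n + 1))))
      {x | ⟪(v : EuclideanSpace ℝ (Fin (n + 1))), x⟫ = 0} = 0 := by
    have hne : (LinearMap.ker ((innerSL ℝ (v : EuclideanSpace ℝ (Fin (n + 1)))) : EuclideanSpace ℝ (Fin (n + 1)) →ₗ[ℝ] ℝ)) ≠ ⊤ := by
      intro h
      have hv : ⟪(v : EuclideanSpace ℝ (Fin (n + 1))), (v : EuclideanSpace ℝ (Fin (n + 1)))⟫ = 0 := by
        have := h ▸ Submodule.mem_top (R := ℝ) (x := (v : EuclideanSpace ℝ (Fin (n + 1))))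
        simpa [LinearMap.mem_ker] using this
      have : ‖(v : EuclideanSpace ℝ (Fin (n + 1)))‖ = 1 := by
        simpa using mem_sphere_zero_iff_norm.mp v.2
      rw [real_inner_self_eq_norm_sq, this] at hv
      norm_num at hv
    have h0 := Measure.addHaar_submodule (volume : Measure (EuclideanSpace ℝ (Fin (n + 1))))
      (LinearMap.ker ((innerSL ℝ (v : EuclideanSpace ℝ (Fin (n + 1)))) : EuclideanSpace ℝ (Fin (n + 1)) →ₗ[ℝ] ℝ)) hne
    refine le_antisymm (le_trans (measure_mono ?_) h0.le) zero_le
    intro x hx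
    simpa [LinearMap.mem_ker] using hx
  have hsub : (Ioo (0:ℝ) 1 • ((↑) '' s)) ⊆
      {x : EuclideanSpace ℝ (Fin (n + 1)) | ⟪(v : EuclideanSpace ℝ (Fin (n + 1))), x⟫ = 0} := by
    rintro x hx
    obtain ⟨r, hr, y, hy, rfl⟩ := hx
    obtain ⟨u, hu, rfl⟩ := hy
    have hu' : ⟪(v : EuclideanSpace ℝ (Fin (n + 1))), (u : EuclideanSpace ℝ (Fin (n + 1)))⟫ = 0 := hu
    simp only [mem_setOf_eq, real_inner_smul_right, hu', mul_zero]
  rw [measure_mono_null hsub hker]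
  simp

end Aux

lemma aux_cont (n : ℕ) (G : sphere (0 : EuclideanSpace ℝ (Fin (n + 1))) 1 → ℝ)
    (hG : Continuous G) :
    Continuous fun v : sphere (0 : EuclideanSpace ℝ (Fin (n + 1))) 1 =>
      ∫ u in {u : sphere (0 : EuclideanSpace ℝ (Fin (n + 1))) 1 |
        0 < ⟪(v : EuclideanSpace ℝ (Fin (n + 1))), (u : EuclideanSpace ℝ (Fin (n + 1)))⟫},
        G u ∂((volume : Measure (EuclideanSpace ℝ (Fin (n + 1)))).toSphere) := by
  set μ := ((volume : Measure (EuclideanSpace ℝ (Fin (n + 1)))).toSphere)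
  have hGint : Integrable G μ :=
    hG.integrable_of_hasCompactSupport (HasCompactSupport.of_compactSpace G)
  have hopen : ∀ v : sphere (0 : EuclideanSpace ℝ (Fin (n + 1))) 1, IsOpen
      {u : sphere (0 : EuclideanSpace ℝ (Fin (n + 1))) 1 |
        0 < ⟪(v : EuclideanSpace ℝ (Fin (n + 1))), (u : EuclideanSpace ℝ (Fin (n + 1)))⟫} :=
    fun v => isOpen_lt continuous_const (continuous_const.inner continuous_subtype_val)
  rw [continuous_iff_continuousAt]
  intro v₀
  have hrw : ∀ v : sphere (0 : EuclideanSpace ℝ (Fin (n + 1))) 1,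
      (∫ u in {u : sphere (0 : EuclideanSpace ℝ (Fin (n + 1))) 1 |
        0 < ⟪(v : EuclideanSpace ℝ (Fin (n + 1))), (u : EuclideanSpace ℝ (Fin (n + 1)))⟫}, G u ∂μ)
      = ∫ u, Set.indicator {u : sphere (0 : EuclideanSpace ℝ (Fin (n + 1))) 1 |
          0 < ⟪(v : EuclideanSpace ℝ (Fin (n + 1))), (u : EuclideanSpace ℝ (Fin (n + 1)))⟫} G u ∂μ :=
    fun v => (integral_indicator (hopen v).measurableSet).symm
  simp only [ContinuousAt, hrw]
  apply tendsto_integral_filter_of_dominated_convergence (fun u => ‖G u‖)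
  · exact Filter.Eventually.of_forall fun v =>
      hG.aestronglyMeasurable.indicator (hopen v).measurableSet
  · exact Filter.Eventually.of_forall fun v => Filter.Eventually.of_forall fun u =>
      norm_indicator_le_norm_self G u
  · exact hGint.norm
  · have h0 := aux_null n v₀
    rw [← compl_mem_ae_iff] at h0
    filter_upwards [h0] with u hu
    simp only [Set.mem_compl_iff, Set.mem_setOf_eq] at hu
    have hc : Continuous fun v : sphere (0 : EuclideanSpace ℝ (Fin (n + 1))) 1 =>
        ⟪(v : EuclideanSpace ℝ (Fin (n + 1))), (u : EuclideanSpace ℝ (Fin (n + 1)))⟫ :=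
      (continuous_subtype_val.inner continuous_const)
    rcases lt_or_gt_of_ne hu with hlt | hgt
    · have hev : ∀ᶠ v in nhds v₀, v ∈ {v : sphere (0 : EuclideanSpace ℝ (Fin (n + 1))) 1 |
          ⟪(v : EuclideanSpace ℝ (Fin (n + 1))), (u : EuclideanSpace ℝ (Fin (n + 1)))⟫ < 0} :=
        (isOpen_lt hc continuous_const).eventually_mem (by exact hlt)
      have : Set.indicator {u' : sphere (0 : EuclideanSpace ℝ (Fin (n + 1))) 1 |
          0 < ⟪((v₀ : sphere (0 : EuclideanSpace ℝ (Fin (n + 1))) 1) :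
            EuclideanSpace ℝ (Fin (n + 1))), (u' : EuclideanSpace ℝ (Fin (n + 1)))⟫} G u = 0 := by
        apply Set.indicator_of_notMem
        simp only [Set.mem_setOf_eq, not_lt]
        exact hlt.le
      rw [this]
      apply Filter.Tendsto.congr' _ tendsto_const_nhds
      filter_upwards [hev] with v hv
      exact (Set.indicator_of_notMem (by simpa using not_lt.mpr hv.le) G).symm
    · have hev : ∀ᶠ v in nhds v₀, v ∈ {v : sphere (0 : EuclideanSpace ℝ (Fin (n + 1))) 1 |
          0 < ⟪(v : EuclideanSpace ℝ (Fin (n + 1))), (u : EuclideanSpace ℝ (Fin (n + 1)))⟫} :=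
        (isOpen_lt continuous_const hc).eventually_mem (by exact hgt)
      have : Set.indicator {u' : sphere (0 : EuclideanSpace ℝ (Fin (n + 1))) 1 |
          0 < ⟪((v₀ : sphere (0 : EuclideanSpace ℝ (Fin (n + 1))) 1) :
            EuclideanSpace ℝ (Fin (n + 1))), (u' : EuclideanSpace ℝ (Fin (n + 1)))⟫} G u = G u :=
        Set.indicator_of_mem (Set.mem_setOf_eq ▸ hgt) G
      rw [this]
      apply Filter.Tendsto.congr' _ tendsto_const_nhds
      filter_upwards [hev] with v hv
      exact (Set.indicator_of_mem (Set.mem_setOf_eq ▸ hv) G).symm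

lemma aux_sum (n : ℕ) (G : sphere (0 : EuclideanSpace ℝ (Fin (n + 1))) 1 → ℝ)
    (hG : Continuous G) (v : sphere (0 : EuclideanSpace ℝ (Fin (n + 1))) 1) :
    (∫ u in {u : sphere (0 : EuclideanSpace ℝ (Fin (n + 1))) 1 |
        0 < ⟪(v : EuclideanSpace ℝ (Fin (n + 1))), (u : EuclideanSpace ℝ (Fin (n + 1)))⟫},
        G u ∂((volume : Measure (EuclideanSpace ℝ (Fin (n + 1)))).toSphere)) +
    (∫ u in {u : sphere (0 : EuclideanSpace ℝ (Fin (n + 1))) 1 |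
        0 < ⟪((-v : sphere (0 : EuclideanSpace ℝ (Fin (n + 1))) 1) :
          EuclideanSpace ℝ (Fin (n + 1))), (u : EuclideanSpace ℝ (Fin (n + 1)))⟫},
        G u ∂((volume : Measure (EuclideanSpace ℝ (Fin (n + 1)))).toSphere)) =
    ∫ u, G u ∂((volume : Measure (EuclideanSpace ℝ (Fin (n + 1)))).toSphere) := by
  set μ := ((volume : Measure (EuclideanSpace ℝ (Fin (n + 1)))).toSphere)
  have hGint : Integrable G μ :=
    hG.integrable_of_hasCompactSupport (HasCompactSupport.of_compactSpace G)
  set s : Set (sphere (0 : EuclideanSpace ℝ (Fin (n + 1))) 1) :=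
    {u | 0 < ⟪(v : EuclideanSpace ℝ (Fin (n + 1))), (u : EuclideanSpace ℝ (Fin (n + 1)))⟫} with hs_def
  set t : Set (sphere (0 : EuclideanSpace ℝ (Fin (n + 1))) 1) :=
    {u | ⟪(v : EuclideanSpace ℝ (Fin (n + 1))), (u : EuclideanSpace ℝ (Fin (n + 1)))⟫ < 0} with ht_def
  have hinner : Continuous fun u : sphere (0 : EuclideanSpace ℝ (Fin (n + 1))) 1 =>
      ⟪(v : EuclideanSpace ℝ (Fin (n + 1))), (u : EuclideanSpace ℝ (Fin (n + 1)))⟫ :=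
    (continuous_const.inner continuous_subtype_val)
  have hteq : {u : sphere (0 : EuclideanSpace ℝ (Fin (n + 1))) 1 |
      0 < ⟪((-v : sphere (0 : EuclideanSpace ℝ (Fin (n + 1))) 1) :
        EuclideanSpace ℝ (Fin (n + 1))), (u : EuclideanSpace ℝ (Fin (n + 1)))⟫} = t := by
    ext u
    simp only [ht_def, Set.mem_setOf_eq, coe_neg_sphere, inner_neg_left]
    constructor
    · intro h; linarith
    · intro h; linarith
  rw [hteq]
  have hsm : MeasurableSet s := (isOpen_lt continuous_const hinner).measurableSet
  have htm : MeasurableSet t := (isOpen_lt hinner continuous_const).measurableSet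
  have hdisj : Disjoint s t := by
    rw [Set.disjoint_left]
    intro u hu hu'
    simp only [hs_def, ht_def, Set.mem_setOf_eq] at hu hu'
    exact absurd (hu.trans hu') (lt_irrefl 0)
  rw [← setIntegral_union hdisj htm hGint.integrableOn hGint.integrableOn]
  have hae : ((s ∪ t : Set (sphere (0 : EuclideanSpace ℝ (Fin (n + 1))) 1))) =ᵐ[μ] (Set.univ : Set (sphere (0 : EuclideanSpace ℝ (Fin (n + 1))) 1)) := by
    rw [MeasureTheory.ae_eq_univ]
    have : (s ∪ t)ᶜ ⊆ {u : sphere (0 : EuclideanSpace ℝ (Fin (n + 1))) 1 |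
        ⟪(v : EuclideanSpace ℝ (Fin (n + 1))), (u : EuclideanSpace ℝ (Fin (n + 1)))⟫ = 0} := by
      intro u hu
      simp only [Set.mem_compl_iff, Set.mem_union, hs_def, ht_def, Set.mem_setOf_eq, not_or,
        not_lt] at hu
      exact le_antisymm hu.1 hu.2
    exact measure_mono_null this (aux_null n v)
  rw [setIntegral_congr_set hae, setIntegral_univ]

/-- If two continuous functions on the sphere `Sⁿ` have positive total integral, then some
hemisphere gives positive integral to both simultaneously. -/
theorem stmt_14 (n : ℕ) (hn : 1 ≤ n)
    (G₁ G₂ : sphere (0 : EuclideanSpace ℝ (Fin (n + 1))) 1 → ℝ)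
    (hG₁ : Continuous G₁) (hG₂ : Continuous G₂)
    (h₁ : 0 < ∫ u, G₁ u ∂((volume : Measure (EuclideanSpace ℝ (Fin (n + 1)))).toSphere))
    (h₂ : 0 < ∫ u, G₂ u ∂((volume : Measure (EuclideanSpace ℝ (Fin (n + 1)))).toSphere)) :
    ∃ v : sphere (0 : EuclideanSpace ℝ (Fin (n + 1))) 1,
      (0 < ∫ u in {u : sphere (0 : EuclideanSpace ℝ (Fin (n + 1))) 1 |
          0 < ⟪(v : EuclideanSpace ℝ (Fin (n + 1))), (u : EuclideanSpace ℝ (Fin (n + 1)))⟫},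
          G₁ u ∂((volume : Measure (EuclideanSpace ℝ (Fin (n + 1)))).toSphere)) ∧
      (0 < ∫ u in {u : sphere (0 : EuclideanSpace ℝ (Fin (n + 1))) 1 |
          0 < ⟪(v : EuclideanSpace ℝ (Fin (n + 1))), (u : EuclideanSpace ℝ (Fin (n + 1)))⟫},
          G₂ u ∂((volume : Measure (EuclideanSpace ℝ (Fin (n + 1)))).toSphere)) := by
  classical
  set μ := ((volume : Measure (EuclideanSpace ℝ (Fin (n + 1)))).toSphere) with hμ
  set F₁ : sphere (0 : EuclideanSpace ℝ (Fin (n + 1))) 1 → ℝ := fun v =>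
    ∫ u in {u : sphere (0 : EuclideanSpace ℝ (Fin (n + 1))) 1 |
      0 < ⟪(v : EuclideanSpace ℝ (Fin (n + 1))), (u : EuclideanSpace ℝ (Fin (n + 1)))⟫},
      G₁ u ∂μ with hF₁def
  set F₂ : sphere (0 : EuclideanSpace ℝ (Fin (n + 1))) 1 → ℝ := fun v =>
    ∫ u in {u : sphere (0 : EuclideanSpace ℝ (Fin (n + 1))) 1 |
      0 < ⟪(v : EuclideanSpace ℝ (Fin (n + 1))), (u : EuclideanSpace ℝ (Fin (n + 1)))⟫},
      G₂ u ∂μ with hF₂def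
  have hcF₁ : Continuous F₁ := aux_cont n G₁ hG₁
  have hcF₂ : Continuous F₂ := aux_cont n G₂ hG₂
  have hsum₁ : ∀ v, F₁ v + F₁ (-v) = ∫ u, G₁ u ∂μ := fun v => aux_sum n G₁ hG₁ v
  have hsum₂ : ∀ v, F₂ v + F₂ (-v) = ∫ u, G₂ u ∂μ := fun v => aux_sum n G₂ hG₂ v
  by_contra hcon
  push_neg at hcon
  have key : ∀ v, F₁ v ≤ 0 ∨ F₂ v ≤ 0 := fun v => by
    by_cases h : 0 < F₁ v
    · exact Or.inr (hcon v h)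
    · exact Or.inl (not_lt.mp h)
  have hflip₁ : ∀ v, F₁ v ≤ 0 → 0 < F₁ (-v) := fun v h => by
    have := hsum₁ v; linarith
  have hflip₂ : ∀ v, F₂ v ≤ 0 → 0 < F₂ (-v) := fun v h => by
    have := hsum₂ v; linarith
  set A : Set (sphere (0 : EuclideanSpace ℝ (Fin (n + 1))) 1) := {v | F₁ v ≤ 0} with hAdef
  have hAc : IsClosed A := isClosed_le hcF₁ continuous_const
  have hcompl : Aᶜ = (fun v => -v) ⁻¹' A := by
    ext v
    simp only [Set.mem_compl_iff, Set.mem_preimage, hAdef, Set.mem_setOf_eq, not_le]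
    constructor
    · intro h1
      have h2 : F₂ v ≤ 0 := hcon v h1
      have h3 : 0 < F₂ (-v) := hflip₂ v h2
      rcases key (-v) with h | h
      · exact h
      · linarith
    · intro hv
      have h := hflip₁ (-v) hv
      rwa [neg_neg] at h
  have hopenA : IsOpen A := by
    rw [← isClosed_compl_iff, hcompl]
    exact hAc.preimage continuous_neg
  have hconn : ConnectedSpace (sphere (0 : EuclideanSpace ℝ (Fin (n + 1))) 1) := by
    have hrank : 1 < Module.rank ℝ (EuclideanSpace ℝ (Fin (n + 1))) := by
      rw [← Module.finrank_eq_rank, finrank_euclideanSpace_fin]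
      exact_mod_cast by omega
    exact Subtype.connectedSpace (isConnected_sphere hrank (0 : EuclideanSpace ℝ (Fin (n + 1)))
      zero_le_one)
  rcases isClopen_iff.mp ⟨hAc, hopenA⟩ with h | h
  · have : ∀ v, F₁ v ≤ 0 → False := fun v hv => by
      have : v ∈ A := hv
      rw [h] at this
      exact this
    obtain ⟨v⟩ : Nonempty (sphere (0 : EuclideanSpace ℝ (Fin (n + 1))) 1) := hconn.toNonempty
    rcases key v with hv | hv
    · exact this v hv
    · have h3 : 0 < F₂ (-v) := hflip₂ v hv
      have h4 : 0 < F₁ (-v) := by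
        by_contra h5
        exact this (-v) (not_lt.mp h5)
      have h6 : F₂ (-v) ≤ 0 := hcon (-v) h4
      linarith
  · have hv : ∀ v, F₁ v ≤ 0 := fun v => by
      have : v ∈ A := by rw [h]; trivial
      exact this
    have := hsum₁ (Classical.arbitrary _)
    have h1 := hv (Classical.arbitrary (sphere (0 : EuclideanSpace ℝ (Fin (n + 1))) 1))
    have h2 := hv (-(Classical.arbitrary (sphere (0 : EuclideanSpace ℝ (Fin (n + 1))) 1)))
    linarith
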